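/- For θ = arctan(v/u), θ_ma = arctan(c/sqrt(q²-c²)) with u > c > 0 and q² = u²+v², the partial derivative of λⱼ = tan(θ + (-1)^{σ(j)} θ_ma) with respect to u equals -sec²(θ + (-1)^{σ(j)} θ_ma)·sin(θ + (-1)^{σ(j)} θ_ma)/sqrt(q²-c²), and with respect to v equals sec²(θ + (-1)^{σ(j)} θ_ma)·cos(θ + (-1)^{σ(j)} θ_ma)/sqrt(q²-c²), where σ(1)=1 and σ(3)=0 and c is held fixed. -/

import Mathlib

private lemma lpd_sqrt_one_add_div_sq (a b : ℝ) (hb : 0 < b) :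
    Real.sqrt (1 + (a / b) ^ 2) = Real.sqrt (a ^ 2 + b ^ 2) / b := by
  rw [show 1 + (a / b) ^ 2 = (a ^ 2 + b ^ 2) / b ^ 2 by field_simp; ring,
    Real.sqrt_div (by positivity), Real.sqrt_sq hb.le]

private lemma lpd_key_sincos (c u v e : ℝ) (hc : 0 < c) (hu : c < u) (he : e = 1 ∨ e = -1) :
    Real.sin (Real.arctan (v / u) + e * Real.arctan (c / Real.sqrt (u ^ 2 + v ^ 2 - c ^ 2)))
      = (v * Real.sqrt (u ^ 2 + v ^ 2 - c ^ 2) + e * u * c) / (u ^ 2 + v ^ 2) ∧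
    Real.cos (Real.arctan (v / u) + e * Real.arctan (c / Real.sqrt (u ^ 2 + v ^ 2 - c ^ 2)))
      = (u * Real.sqrt (u ^ 2 + v ^ 2 - c ^ 2) - e * v * c) / (u ^ 2 + v ^ 2) := by
  have hu0 : 0 < u := hc.trans hu
  set s := Real.sqrt (u ^ 2 + v ^ 2 - c ^ 2) with hs
  have hpos : 0 < u ^ 2 + v ^ 2 - c ^ 2 := by nlinarith
  have hs0 : 0 < s := Real.sqrt_pos.2 hpos
  have hs2 : s ^ 2 = u ^ 2 + v ^ 2 - c ^ 2 := Real.sq_sqrt hpos.le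
  have hq0 : 0 < u ^ 2 + v ^ 2 := by positivity
  have hq : Real.sqrt (u ^ 2 + v ^ 2) ^ 2 = u ^ 2 + v ^ 2 := Real.sq_sqrt hq0.le
  have hqpos : 0 < Real.sqrt (u ^ 2 + v ^ 2) := Real.sqrt_pos.2 hq0
  set q := Real.sqrt (u ^ 2 + v ^ 2) with hqdef
  have h1 : Real.sqrt (1 + (v / u) ^ 2) = q / u := by
    rw [lpd_sqrt_one_add_div_sq v u hu0, hqdef]; ring_nf
  have h2 : Real.sqrt (1 + (c / s) ^ 2) = q / s := by
    rw [lpd_sqrt_one_add_div_sq c s hs0, hqdef, hs2]; ring_nf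
  have hsinθ : Real.sin (Real.arctan (v / u)) = v / q := by
    rw [Real.sin_arctan, h1]; field_simp
  have hcosθ : Real.cos (Real.arctan (v / u)) = u / q := by
    rw [Real.cos_arctan, h1]; field_simp
  have hsinφ : Real.sin (Real.arctan (c / s)) = c / q := by
    rw [Real.sin_arctan, h2]; field_simp
  have hcosφ : Real.cos (Real.arctan (c / s)) = s / q := by
    rw [Real.cos_arctan, h2]; field_simp
  have hsine : Real.sin (e * Real.arctan (c / s)) = e * (c / q) := by
    rcases he with h | h <;> subst h <;> simp [hsinφ]
  have hcose : Real.cos (e * Real.arctan (c / s)) = s / q := by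
    rcases he with h | h <;> subst h <;> simp [hcosφ]
  have hq2 : q * q = u ^ 2 + v ^ 2 := by nlinarith [hq]
  constructor
  · rw [Real.sin_add, hsinθ, hcosθ, hsine, hcose, ← hq2]
    field_simp
  · rw [Real.cos_add, hsinθ, hcosθ, hsine, hcose, ← hq2]
    field_simp

/-- Partial derivatives of `λⱼ(u,v) = tan (arctan (v/u) + e · arctan (c/√(u²+v²-c²)))`
(`e = (-1)^{σ(j)} ∈ {1, -1}`, `c > 0` fixed) in the region `u > c > 0`:
`∂λⱼ/∂u = -sec²(Θ) sin(Θ)/√(q²-c²)` and `∂λⱼ/∂v = sec²(Θ) cos(Θ)/√(q²-c²)`,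
where `Θ = arctan (v/u) + e · arctan (c/√(u²+v²-c²))`. -/
theorem lambda_partial_derivatives (c u v e : ℝ)
    (hc : 0 < c) (hu : c < u) (he : e = 1 ∨ e = -1) :
    HasDerivAt
      (fun u' : ℝ => Real.tan (Real.arctan (v / u') +
        e * Real.arctan (c / Real.sqrt (u' ^ 2 + v ^ 2 - c ^ 2))))
      (-(1 / (Real.cos (Real.arctan (v / u) +
          e * Real.arctan (c / Real.sqrt (u ^ 2 + v ^ 2 - c ^ 2)))) ^ 2 *
        Real.sin (Real.arctan (v / u) +
          e * Real.arctan (c / Real.sqrt (u ^ 2 + v ^ 2 - c ^ 2)))) /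
        Real.sqrt (u ^ 2 + v ^ 2 - c ^ 2)) u ∧
    HasDerivAt
      (fun v' : ℝ => Real.tan (Real.arctan (v' / u) +
        e * Real.arctan (c / Real.sqrt (u ^ 2 + v' ^ 2 - c ^ 2))))
      ((1 / (Real.cos (Real.arctan (v / u) +
          e * Real.arctan (c / Real.sqrt (u ^ 2 + v ^ 2 - c ^ 2)))) ^ 2 *
        Real.cos (Real.arctan (v / u) +
          e * Real.arctan (c / Real.sqrt (u ^ 2 + v ^ 2 - c ^ 2)))) /
        Real.sqrt (u ^ 2 + v ^ 2 - c ^ 2)) v := by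
  obtain ⟨hsin, hcos⟩ := lpd_key_sincos c u v e hc hu he
  have hu0 : 0 < u := hc.trans hu
  have hpos : 0 < u ^ 2 + v ^ 2 - c ^ 2 := by nlinarith
  set s := Real.sqrt (u ^ 2 + v ^ 2 - c ^ 2) with hsdef
  have hs0 : 0 < s := Real.sqrt_pos.2 hpos
  have hs2 : s ^ 2 = u ^ 2 + v ^ 2 - c ^ 2 := Real.sq_sqrt hpos.le
  have he2 : e ^ 2 = 1 := by rcases he with h | h <;> subst h <;> norm_num
  have hq0 : (0:ℝ) < u ^ 2 + v ^ 2 := by positivity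
  -- cos Θ ≠ 0
  have hcosne : Real.cos (Real.arctan (v / u) + e * Real.arctan (c / s)) ≠ 0 := by
    rw [hcos]
    intro h
    have h2 : u * s - e * v * c = 0 := by
      field_simp at h; linarith
    have h3 : (u * s) ^ 2 = (e * v * c) ^ 2 := by rw [show u * s = e * v * c from by linarith]
    have h4 : u ^ 2 * (u ^ 2 + v ^ 2 - c ^ 2) = v ^ 2 * c ^ 2 := by
      linear_combination h3 + (-(u ^ 2)) * hs2 + v ^ 2 * c ^ 2 * he2
    nlinarith [mul_pos hq0 (show (0:ℝ) < u ^ 2 - c ^ 2 by nlinarith)]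
  have h1 : 1 + (v / u) ^ 2 = (u ^ 2 + v ^ 2) / u ^ 2 := by field_simp
  have h2 : 1 + (c / s) ^ 2 = (u ^ 2 + v ^ 2) / s ^ 2 := by
    have hne : s ≠ 0 := hs0.ne'
    field_simp
    linarith [hs2]
  constructor
  · -- ∂/∂u
    have d1 : HasDerivAt (fun u' : ℝ => v / u') ((0 * u - v * 1) / u ^ 2) u :=
      (hasDerivAt_const u v).div (hasDerivAt_id u) hu0.ne'
    have d2 : HasDerivAt (fun u' : ℝ => Real.arctan (v / u'))
        (1 / (1 + (v / u) ^ 2) * ((0 * u - v * 1) / u ^ 2)) u :=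
      (Real.hasDerivAt_arctan (v / u)).comp u d1
    have d3 : HasDerivAt (fun u' : ℝ => u' ^ 2 + v ^ 2 - c ^ 2) (2 * u) u := by
      have := ((hasDerivAt_pow 2 u).add_const (v ^ 2)).sub_const (c ^ 2)
      simpa using this
    have d4 : HasDerivAt (fun u' : ℝ => Real.sqrt (u' ^ 2 + v ^ 2 - c ^ 2))
        (2 * u / (2 * s)) u := d3.sqrt hpos.ne'
    have d5 : HasDerivAt (fun u' : ℝ => c / Real.sqrt (u' ^ 2 + v ^ 2 - c ^ 2))
        ((0 * s - c * (2 * u / (2 * s))) / s ^ 2) u :=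
      (hasDerivAt_const u c).div d4 hs0.ne'
    have d6 : HasDerivAt (fun u' : ℝ => e * Real.arctan (c / Real.sqrt (u' ^ 2 + v ^ 2 - c ^ 2)))
        (e * (1 / (1 + (c / s) ^ 2) * ((0 * s - c * (2 * u / (2 * s))) / s ^ 2))) u :=
      by have := ((Real.hasDerivAt_arctan (c / s)).comp u d5).const_mul e; exact this
    have d7 := (Real.hasDerivAt_tan hcosne).comp u (d2.add d6)
    convert d7 using 1
    case e'_4 => rfl
    case e'_5 => rfl
    case e'_8 => rfl
    rw [hsin, h1, h2]
    field_simp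
    clear_value s
    ring
  · -- ∂/∂v
    have d1 : HasDerivAt (fun v' : ℝ => v' / u) (1 / u) v := by
      simpa using (hasDerivAt_id v).div_const u
    have d2 : HasDerivAt (fun v' : ℝ => Real.arctan (v' / u))
        (1 / (1 + (v / u) ^ 2) * (1 / u)) v :=
      by have := (Real.hasDerivAt_arctan (v / u)).comp v d1; exact this
    have d3 : HasDerivAt (fun v' : ℝ => u ^ 2 + v' ^ 2 - c ^ 2) (2 * v) v := by
      have := ((hasDerivAt_pow 2 v).const_add (u ^ 2)).sub_const (c ^ 2)
      simpa using this
    have d4 : HasDerivAt (fun v' : ℝ => Real.sqrt (u ^ 2 + v' ^ 2 - c ^ 2))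
        (2 * v / (2 * s)) v := d3.sqrt hpos.ne'
    have d5 : HasDerivAt (fun v' : ℝ => c / Real.sqrt (u ^ 2 + v' ^ 2 - c ^ 2))
        ((0 * s - c * (2 * v / (2 * s))) / s ^ 2) v :=
      (hasDerivAt_const v c).div d4 hs0.ne'
    have d6 : HasDerivAt (fun v' : ℝ => e * Real.arctan (c / Real.sqrt (u ^ 2 + v' ^ 2 - c ^ 2)))
        (e * (1 / (1 + (c / s) ^ 2) * ((0 * s - c * (2 * v / (2 * s))) / s ^ 2))) v :=
      by have := ((Real.hasDerivAt_arctan (c / s)).comp v d5).const_mul e; exact this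
    have d7 := (Real.hasDerivAt_tan hcosne).comp v (d2.add d6)
    convert d7 using 1
    case e'_4 => rfl
    case e'_5 => rfl
    case e'_8 => rfl
    rw [hcos, h1, h2]
    have key : 1 / ((u ^ 2 + v ^ 2) / u ^ 2) * (1 / u) +
        e * (1 / ((u ^ 2 + v ^ 2) / s ^ 2) * ((0 * s - c * (2 * v / (2 * s))) / s ^ 2)) =
        (u * s - e * v * c) / s / (u ^ 2 + v ^ 2) := by
      field_simp [hs0.ne', hu0.ne', hq0.ne']
      ring
    rw [key]
    ring
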